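/- Let 0 < a < b, Δq > 0, and let f_U(ε) = 1/(b−a) for ε ∈ [a,b] and 0 otherwise be the uniform density U(a,b). Let g(x) = ∫_a^b f_U(ε)·(ε/2)·exp(−ε·|x|) dε be the corresponding mixture Laplace density, and set α = a·Δq and β = b·Δq. Then the mechanism is ε₀-differentially private with ε₀ = ln[ (α² − β²) / ( 2·((1+β)·exp(−β) − (1+α)·exp(−α)) ) ]: for every measurable set S ⊆ ℝ and all shifts a₁, a₂ ∈ ℝ with |a₁ − a₂| ≤ Δq, ∫_S g(x − a₁) dx ≤ exp(ε₀) · ∫_S g(x − a₂) dx. -/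

import Mathlib

open MeasureTheory Real

noncomputable def phiML (a b t : ℝ) : ℝ := ∫ ε in Set.Icc a b, ε * Real.exp (-(ε * t))

lemma contML (c : ℝ) : Continuous (fun ε : ℝ => ε * Real.exp (-(ε * c))) := by
  fun_prop

lemma integrableOnML (a b c : ℝ) :
    IntegrableOn (fun ε : ℝ => ε * Real.exp (-(ε * c))) (Set.Icc a b) volume :=
  (contML c).integrableOn_Icc

lemma phiML_antitone {a b : ℝ} (ha : 0 < a) : Antitone (phiML a b) := by
  intro t s hts
  refine setIntegral_mono_on (integrableOnML a b s) (integrableOnML a b t)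
    measurableSet_Icc (fun ε hε => ?_)
  have hε0 : 0 ≤ ε := le_trans ha.le hε.1
  exact mul_le_mul_of_nonneg_left (Real.exp_le_exp.2 (by nlinarith)) hε0

lemma phiML_pos {a b t : ℝ} (ha : 0 < a) (hab : a < b) (ht : 0 ≤ t) :
    0 < phiML a b t := by
  have h1 : (b - a) * (a * Real.exp (-(b * t))) ≤ phiML a b t := by
    have h2 : ∫ _ε in Set.Icc a b, (a * Real.exp (-(b * t))) ≤ phiML a b t := by
      refine setIntegral_mono_on (integrableOn_const (hs := measure_Icc_lt_top.ne))
        (integrableOnML a b t) measurableSet_Icc (fun ε hε => ?_)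
      have hε0 : 0 ≤ ε := le_trans ha.le hε.1
      exact mul_le_mul hε.1 (Real.exp_le_exp.2 (by nlinarith [hε.2])) (Real.exp_pos _).le hε0
    calc (b - a) * (a * Real.exp (-(b * t)))
        = ∫ _ε in Set.Icc a b, (a * Real.exp (-(b * t))) := by
          rw [setIntegral_const, measureReal_def, Real.volume_Icc, smul_eq_mul,
            ENNReal.toReal_ofReal (by linarith)]
      _ ≤ phiML a b t := h2
  have hpos : 0 < (b - a) * (a * Real.exp (-(b * t))) := by
    have : 0 < b - a := by linarith
    positivity
  linarith

lemma phiML_le {a b t : ℝ} (ha : 0 < a) (hab : a < b) (ht : 0 ≤ t) :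
    phiML a b t ≤ (b - a) * (b * Real.exp (-(a * t))) := by
  have h2 : phiML a b t ≤ ∫ _ε in Set.Icc a b, (b * Real.exp (-(a * t))) := by
    refine setIntegral_mono_on (integrableOnML a b t)
      (integrableOn_const (hs := measure_Icc_lt_top.ne)) measurableSet_Icc (fun ε hε => ?_)
    have hε0 : 0 ≤ ε := le_trans ha.le hε.1
    exact mul_le_mul hε.2 (Real.exp_le_exp.2 (by nlinarith [hε.1])) (Real.exp_pos _).le
      (by linarith)
  calc phiML a b t ≤ ∫ _ε in Set.Icc a b, (b * Real.exp (-(a * t))) := h2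
    _ = (b - a) * (b * Real.exp (-(a * t))) := by
        rw [setIntegral_const, measureReal_def, Real.volume_Icc, smul_eq_mul,
          ENNReal.toReal_ofReal (by linarith)]

lemma phiML_zero_eq {a b : ℝ} : phiML a b 0 = ∫ ε in Set.Icc a b, ε := by
  unfold phiML; simp

lemma phiML_cheb {a b t s : ℝ} (ha : 0 < a) (ht : 0 ≤ t) (hs : 0 ≤ s) :
    phiML a b t * phiML a b s ≤ phiML a b 0 * phiML a b (t + s) := by
  set I := Set.Icc a b with hI
  have mI : MeasurableSet I := measurableSet_Icc
  set J0 : ℝ := ∫ η in I, η with hJ0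
  have hIntId : IntegrableOn (fun η : ℝ => η) I volume := continuous_id.integrableOn_Icc
  have key : 0 ≤ ∫ ε in I, (∫ η in I, (ε * η) *
      ((Real.exp (-(ε * t)) - Real.exp (-(η * t))) *
       (Real.exp (-(ε * s)) - Real.exp (-(η * s))))) := by
    refine setIntegral_nonneg mI (fun ε hε => setIntegral_nonneg mI (fun η hη => ?_))
    have hε0 : 0 ≤ ε := le_trans ha.le hε.1
    have hη0 : 0 ≤ η := le_trans ha.le hη.1
    refine mul_nonneg (mul_nonneg hε0 hη0) ?_
    rcases le_total ε η with h | h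
    · exact mul_nonneg (sub_nonneg.2 (Real.exp_le_exp.2 (by nlinarith)))
        (sub_nonneg.2 (Real.exp_le_exp.2 (by nlinarith)))
    · have h1 : Real.exp (-(ε * t)) ≤ Real.exp (-(η * t)) := Real.exp_le_exp.2 (by nlinarith)
      have h2 : Real.exp (-(ε * s)) ≤ Real.exp (-(η * s)) := Real.exp_le_exp.2 (by nlinarith)
      nlinarith
  have inner_eq : ∀ ε : ℝ, (∫ η in I, (ε * η) *
      ((Real.exp (-(ε * t)) - Real.exp (-(η * t))) *
       (Real.exp (-(ε * s)) - Real.exp (-(η * s)))))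
      = (ε * Real.exp (-(ε * (t + s)))) * J0
        - (ε * Real.exp (-(ε * t))) * phiML a b s
        - (ε * Real.exp (-(ε * s))) * phiML a b t
        + ε * phiML a b (t + s) := by
    intro ε
    have expand : ∀ η : ℝ, (ε * η) *
        ((Real.exp (-(ε * t)) - Real.exp (-(η * t))) *
         (Real.exp (-(ε * s)) - Real.exp (-(η * s))))
        = (ε * Real.exp (-(ε * (t + s)))) * η
          - (ε * Real.exp (-(ε * t))) * (η * Real.exp (-(η * s)))
          - (ε * Real.exp (-(ε * s))) * (η * Real.exp (-(η * t)))
          + ε * (η * Real.exp (-(η * (t + s)))) := by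
      intro η
      rw [show -(ε * (t + s)) = -(ε * t) + -(ε * s) by ring,
        show -(η * (t + s)) = -(η * t) + -(η * s) by ring,
        Real.exp_add, Real.exp_add]
      ring
    have g1 : IntegrableOn (fun η : ℝ => (ε * Real.exp (-(ε * (t + s)))) * η) I volume :=
      hIntId.const_mul _
    have g2 : IntegrableOn
        (fun η : ℝ => (ε * Real.exp (-(ε * t))) * (η * Real.exp (-(η * s)))) I volume :=
      (integrableOnML a b s).const_mul _
    have g3 : IntegrableOn
        (fun η : ℝ => (ε * Real.exp (-(ε * s))) * (η * Real.exp (-(η * t)))) I volume :=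
      (integrableOnML a b t).const_mul _
    have g4 : IntegrableOn (fun η : ℝ => ε * (η * Real.exp (-(η * (t + s))))) I volume :=
      (integrableOnML a b (t + s)).const_mul _
    have g12 : IntegrableOn (fun η : ℝ => (ε * Real.exp (-(ε * (t + s)))) * η
        - (ε * Real.exp (-(ε * t))) * (η * Real.exp (-(η * s)))) I volume := g1.sub g2
    have g123 : IntegrableOn (fun η : ℝ => (ε * Real.exp (-(ε * (t + s)))) * η
        - (ε * Real.exp (-(ε * t))) * (η * Real.exp (-(η * s)))
        - (ε * Real.exp (-(ε * s))) * (η * Real.exp (-(η * t)))) I volume := g12.sub g3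
    simp_rw [expand]
    rw [integral_add g123 g4, integral_sub g12 g3, integral_sub g1 g2,
      integral_const_mul, integral_const_mul, integral_const_mul, integral_const_mul]
    rfl
  simp_rw [inner_eq] at key
  have f1 : IntegrableOn (fun ε : ℝ => (ε * Real.exp (-(ε * (t + s)))) * J0) I volume :=
    (integrableOnML a b (t + s)).mul_const _
  have f2 : IntegrableOn (fun ε : ℝ => (ε * Real.exp (-(ε * t))) * phiML a b s) I volume :=
    (integrableOnML a b t).mul_const _
  have f3 : IntegrableOn (fun ε : ℝ => (ε * Real.exp (-(ε * s))) * phiML a b t) I volume :=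
    (integrableOnML a b s).mul_const _
  have f4 : IntegrableOn (fun ε : ℝ => ε * phiML a b (t + s)) I volume := hIntId.mul_const _
  have f12 : IntegrableOn (fun ε : ℝ => (ε * Real.exp (-(ε * (t + s)))) * J0
      - (ε * Real.exp (-(ε * t))) * phiML a b s) I volume := f1.sub f2
  have f123 : IntegrableOn (fun ε : ℝ => (ε * Real.exp (-(ε * (t + s)))) * J0
      - (ε * Real.exp (-(ε * t))) * phiML a b s
      - (ε * Real.exp (-(ε * s))) * phiML a b t) I volume := f12.sub f3
  rw [integral_add f123 f4, integral_sub f12 f3, integral_sub f1 f2,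
    integral_mul_const, integral_mul_const, integral_mul_const, integral_mul_const] at key
  have hphi0 : phiML a b 0 = J0 := phiML_zero_eq
  rw [hphi0]
  have hc : phiML a b (t + s) * J0 = J0 * phiML a b (t + s) := mul_comm _ _
  change 0 ≤ (∫ ε in I, ε * Real.exp (-(ε * (t+s)))) * J0
    - (∫ ε in I, ε * Real.exp (-(ε * t))) * phiML a b s
    - (∫ ε in I, ε * Real.exp (-(ε * s))) * phiML a b t
    + (∫ ε in I, ε) * phiML a b (t + s) at key
  have e1 : (∫ ε in I, ε * Real.exp (-(ε * (t+s)))) = phiML a b (t + s) := rfl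
  have e2 : (∫ ε in I, ε * Real.exp (-(ε * t))) = phiML a b t := rfl
  have e3 : (∫ ε in I, ε * Real.exp (-(ε * s))) = phiML a b s := rfl
  rw [e1, e2, e3, ← hJ0] at key
  linarith [key, hc]

lemma phiML_interval {a b t : ℝ} (hab : a ≤ b) :
    phiML a b t = ∫ ε in a..b, ε * Real.exp (-(ε * t)) := by
  rw [phiML, MeasureTheory.integral_Icc_eq_integral_Ioc, ← intervalIntegral.integral_of_le hab]

lemma phiML_zero {a b : ℝ} (hab : a ≤ b) : phiML a b 0 = (b ^ 2 - a ^ 2) / 2 := by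
  rw [phiML_interval hab]
  simp only [mul_zero, neg_zero, Real.exp_zero, mul_one]
  exact integral_id

lemma phiML_closed {a b t : ℝ} (hab : a ≤ b) (ht : 0 < t) :
    phiML a b t = ((1 + a * t) * Real.exp (-(a * t))
      - (1 + b * t) * Real.exp (-(b * t))) / t ^ 2 := by
  have ht' : t ≠ 0 := ht.ne'
  have hderiv : ∀ x ∈ Set.uIcc a b,
      HasDerivAt (fun ε : ℝ => -((ε / t + 1 / t ^ 2) * Real.exp (-(ε * t))))
        (x * Real.exp (-(x * t))) x := by
    intro x _
    have h3 : HasDerivAt (fun ε : ℝ => ε / t + 1 / t ^ 2) (1 / t) x :=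
      ((hasDerivAt_id x).div_const t).add_const (1 / t ^ 2)
    have h4 : HasDerivAt (fun ε : ℝ => Real.exp (-(ε * t))) (Real.exp (-(x * t)) * (-t)) x := by
      have := (((hasDerivAt_id x).mul_const t).neg).exp
      simpa using this
    have := (h3.mul h4).neg
    refine this.congr_deriv ?_
    field_simp
    ring
  have hint : IntervalIntegrable (fun ε : ℝ => ε * Real.exp (-(ε * t))) volume a b :=
    (contML t).intervalIntegrable a b
  rw [phiML_interval hab, intervalIntegral.integral_eq_sub_of_hasDerivAt hderiv hint]
  field_simp
  ring

lemma integrable_exp_neg_mul_absML {a : ℝ} (ha : 0 < a) :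
    Integrable (fun x : ℝ => Real.exp (-(a * |x|))) := by
  have hIoi : IntegrableOn (fun x : ℝ => Real.exp (-(a * |x|))) (Set.Ioi 0) volume := by
    refine (exp_neg_integrableOn_Ioi 0 ha).congr_fun (fun x hx => ?_) measurableSet_Ioi
    rw [abs_of_pos (by exact hx)]
    ring_nf
  have hIic : IntegrableOn (fun x : ℝ => Real.exp (-(a * |x|))) (Set.Iic 0) volume := by
    rw [← Measure.map_neg_eq_self (volume : Measure ℝ)]
    have m : MeasurableEmbedding fun x : ℝ => -x := (Homeomorph.neg ℝ).measurableEmbedding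
    rw [m.integrableOn_map_iff]
    simp_rw [Function.comp_def, abs_neg, Set.neg_preimage, Set.neg_Iic, neg_zero]
    exact Iff.mpr integrableOn_Ici_iff_integrableOn_Ioi hIoi
  rw [← integrableOn_univ, ← Set.Iic_union_Ioi (a := (0:ℝ))]
  exact hIic.union hIoi

/-- The Randomized DP Laplace mechanism whose reciprocal scale is uniformly distributed
on `[a, b]` is `ln[ (α² − β²) / (2·((1+β)e^{−β} − (1+α)e^{−α})) ]`-differentially private,
where `α = a·Δq` and `β = b·Δq`. -/
theorem uniform_mixture_laplace_dp
    (a b Δq : ℝ) (ha : 0 < a) (hab : a < b) (hΔq : 0 < Δq)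
    (fU : ℝ → ℝ)
    (hfU : ∀ ε : ℝ, fU ε = if ε ∈ Set.Icc a b then 1 / (b - a) else 0)
    (g : ℝ → ℝ)
    (hg : ∀ x : ℝ, g x = ∫ ε in Set.Icc a b, fU ε * ((ε / 2) * Real.exp (-(ε * |x|))))
    (α β : ℝ) (hα : α = a * Δq) (hβ : β = b * Δq)
    (ε₀ : ℝ)
    (hε₀ : ε₀ = Real.log ((α ^ 2 - β ^ 2) /
      (2 * ((1 + β) * Real.exp (-β) - (1 + α) * Real.exp (-α))))) :
    ∀ S : Set ℝ, MeasurableSet S → ∀ a₁ a₂ : ℝ, |a₁ - a₂| ≤ Δq →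
      ∫ x in S, g (x - a₁) ≤ Real.exp ε₀ * ∫ x in S, g (x - a₂) := by
  intro S hS a₁ a₂ hdist
  have hab' : a ≤ b := hab.le
  have hba : 0 < b - a := sub_pos.2 hab
  set c : ℝ := 1 / (2 * (b - a)) with hc
  have hcpos : 0 < c := by positivity
  have hgφ : ∀ x : ℝ, g x = c * phiML a b |x| := by
    intro x
    rw [hg x]
    rw [setIntegral_congr_fun measurableSet_Icc
      (g := fun ε => c * (ε * Real.exp (-(ε * |x|))))
      (fun ε hε => by
        have h0 : b - a ≠ 0 := hba.ne'
        rw [hfU ε, if_pos hε, hc]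
        field_simp)]
    rw [integral_const_mul]
    rfl
  have hφΔpos : 0 < phiML a b Δq := phiML_pos ha hab hΔq.le
  have hφ0pos : 0 < phiML a b 0 := phiML_pos ha hab le_rfl
  have hcl := phiML_closed hab' hΔq
  have hz := phiML_zero (a := a) (b := b) hab'
  have hD : 0 < (1 + a * Δq) * Real.exp (-(a * Δq)) - (1 + b * Δq) * Real.exp (-(b * Δq)) := by
    have h := hφΔpos
    rw [hcl] at h
    rcases div_pos_iff.mp h with ⟨h1, _⟩ | ⟨_, h2⟩
    · exact h1
    · exfalso; nlinarith [sq_nonneg Δq, hΔq]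
  have hX : (α ^ 2 - β ^ 2) /
      (2 * ((1 + β) * Real.exp (-β) - (1 + α) * Real.exp (-α)))
      = phiML a b 0 / phiML a b Δq := by
    subst hα hβ
    rw [hz, hcl]
    have hden : 2 * ((1 + b * Δq) * Real.exp (-(b * Δq))
        - (1 + a * Δq) * Real.exp (-(a * Δq))) ≠ 0 := by
      intro hcon
      apply hD.ne'
      linarith
    field_simp
    rw [mul_comm Δq b]
    rw [div_eq_div_iff (neg_ne_zero.mp (by rw [neg_sub]; exact hD.ne')) hD.ne']
    ring
  have hexp : Real.exp ε₀ = phiML a b 0 / phiML a b Δq := by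
    rw [hε₀, hX, Real.exp_log (div_pos hφ0pos hφΔpos)]
  have hpoint : ∀ x : ℝ, g (x - a₁) ≤ Real.exp ε₀ * g (x - a₂) := by
    intro x
    rw [hgφ, hgφ, hexp]
    have hu : (0:ℝ) ≤ |x - a₁| := abs_nonneg _
    have huv : |x - a₂| ≤ |x - a₁| + Δq := by
      have h1 : |x - a₂| ≤ |x - a₁| + |a₁ - a₂| := by
        calc |x - a₂| = |(x - a₁) + (a₁ - a₂)| := by congr 1; ring
          _ ≤ _ := abs_add_le _ _
      linarith
    have hkey : phiML a b |x - a₁| * phiML a b Δq ≤ phiML a b 0 * phiML a b |x - a₂| := by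
      calc phiML a b |x - a₁| * phiML a b Δq
          ≤ phiML a b 0 * phiML a b (|x - a₁| + Δq) := phiML_cheb ha hu hΔq.le
        _ ≤ phiML a b 0 * phiML a b |x - a₂| :=
            mul_le_mul_of_nonneg_left (phiML_antitone ha huv) hφ0pos.le
    have hrw : phiML a b 0 / phiML a b Δq * (c * phiML a b |x - a₂|)
        = c * (phiML a b 0 * phiML a b |x - a₂| / phiML a b Δq) := by ring
    rw [hrw]
    refine mul_le_mul_of_nonneg_left ?_ hcpos.le
    rw [le_div_iff₀ hφΔpos]
    exact hkey
  have hmg : Measurable g := by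
    have hfe : g = fun x => c * phiML a b |x| := funext hgφ
    rw [hfe]
    exact measurable_const.mul ((phiML_antitone ha).measurable.comp measurable_abs)
  have hgnn : ∀ x, 0 ≤ g x := fun x => by
    rw [hgφ]; exact mul_nonneg hcpos.le (phiML_pos ha hab (abs_nonneg _)).le
  have hbound : Integrable (fun x : ℝ => (c * ((b - a) * b)) * Real.exp (-(a * |x|))) :=
    (integrable_exp_neg_mul_absML ha).const_mul _
  have hIntg : Integrable g := by
    refine hbound.mono' hmg.aestronglyMeasurable (ae_of_all _ fun x => ?_)
    rw [Real.norm_eq_abs, abs_of_nonneg (hgnn x), hgφ]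
    calc c * phiML a b |x| ≤ c * ((b - a) * (b * Real.exp (-(a * |x|)))) :=
        mul_le_mul_of_nonneg_left (phiML_le ha hab (abs_nonneg x)) hcpos.le
      _ = (c * ((b - a) * b)) * Real.exp (-(a * |x|)) := by ring
  have hI1 : Integrable (fun x : ℝ => g (x - a₁)) := hIntg.comp_sub_right a₁
  have hI2 : Integrable (fun x : ℝ => g (x - a₂)) := hIntg.comp_sub_right a₂
  calc ∫ x in S, g (x - a₁)
      ≤ ∫ x in S, Real.exp ε₀ * g (x - a₂) :=
        setIntegral_mono_on hI1.integrableOn (hI2.const_mul _).integrableOn hS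
          (fun x _ => hpoint x)
    _ = Real.exp ε₀ * ∫ x in S, g (x - a₂) := integral_const_mul _ _
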